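/- For any trees T_m and T_n on m ≥ 2 and n ≥ 2 vertices respectively, the cycle convexity number of the Cartesian product satisfies C_cc(T_m □ T_n) = max{mn − n, mn − m}. -/

import Mathlib

open SimpleGraph

variable {V α β : Type*}

/-- A set `S` is cycle convex in `G` if no vertex outside `S` lies on a cycle in the
subgraph induced by `S ∪ {w}`. -/
def CycleConvex (G : SimpleGraph V) (S : Set V) : Prop :=
  ∀ w : V, w ∉ S →
    ∀ c : (G.induce (insert w S)).Walk ⟨w, Set.mem_insert w S⟩ ⟨w, Set.mem_insert w S⟩,
      ¬ c.IsCycle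

/-- The cycle convex hull of `S`: the smallest cycle convex set containing `S`. -/
def cycleHull (G : SimpleGraph V) (S : Set V) : Set V :=
  ⋂₀ {T : Set V | S ⊆ T ∧ CycleConvex G T}

/-- The cycle hull number: minimum size of a set whose cycle convex hull is everything. -/
noncomputable def cycleHullNumber (G : SimpleGraph V) : ℕ :=
  sInf {n : ℕ | ∃ S : Set V, S.ncard = n ∧ cycleHull G S = Set.univ}

/-- The cycle convexity number: maximum size of a proper cycle convex set. -/
noncomputable def cycleConvexityNumber (G : SimpleGraph V) : ℕ :=
  sSup {n : ℕ | ∃ S : Set V, S.ncard = n ∧ CycleConvex G S ∧ S ≠ Set.univ}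

/-- The independence number of a graph. -/
noncomputable def indepNumber (G : SimpleGraph V) : ℕ :=
  sSup {n : ℕ | ∃ S : Set V, S.ncard = n ∧ S.Pairwise fun a b => ¬ G.Adj a b}

/-- The strong product of two simple graphs. -/
def strongProd (G : SimpleGraph α) (H : SimpleGraph β) : SimpleGraph (α × β) where
  Adj x y := (G.Adj x.1 y.1 ∧ x.2 = y.2) ∨ (x.1 = y.1 ∧ H.Adj x.2 y.2) ∨
    (G.Adj x.1 y.1 ∧ H.Adj x.2 y.2)
  symm := ⟨fun x y h => by
    rcases h with ⟨h1, h2⟩ | ⟨h1, h2⟩ | ⟨h1, h2⟩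
    · exact Or.inl ⟨h1.symm, h2.symm⟩
    · exact Or.inr (Or.inl ⟨h1.symm, h2.symm⟩)
    · exact Or.inr (Or.inr ⟨h1.symm, h2.symm⟩)⟩
  loopless := ⟨fun x h => by
    rcases h with ⟨h1, _⟩ | ⟨_, h2⟩ | ⟨h1, _⟩
    · exact G.loopless.irrefl _ h1
    · exact H.loopless.irrefl _ h2
    · exact G.loopless.irrefl _ h1⟩

/-- The lexicographic product of two simple graphs. -/
def lexProd (G : SimpleGraph α) (H : SimpleGraph β) : SimpleGraph (α × β) where
  Adj x y := G.Adj x.1 y.1 ∨ (x.1 = y.1 ∧ H.Adj x.2 y.2)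
  symm := ⟨fun x y h => by
    rcases h with h1 | ⟨h1, h2⟩
    · exact Or.inl h1.symm
    · exact Or.inr ⟨h1.symm, h2.symm⟩⟩
  loopless := ⟨fun x h => by
    rcases h with h1 | ⟨_, h2⟩
    · exact G.loopless.irrefl _ h1
    · exact H.loopless.irrefl _ h2⟩


section Aux

open Finset

/-- No cycle through a vertex with a unique neighbor. -/
lemma no_cycle_unique_nbr {V : Type*} {H : SimpleGraph V} {w z : V}
    (hz : ∀ y, H.Adj w y → y = z) (c : H.Walk w w) : ¬ c.IsCycle := by
  intro hc
  cases c with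
  | nil => exact hc.ne_nil rfl
  | @cons _ u _ h p =>
    rw [Walk.cons_isCycle_iff] at hc
    have hu : u = z := hz _ h
    have hwu : w ≠ u := h.ne
    obtain ⟨y, hadj, q, hq⟩ := Walk.exists_eq_cons_of_ne hwu p.reverse
    have hy : y = z := hz _ hadj
    have hmem : s(w, y) ∈ p.reverse.edges := by rw [hq]; simp
    rw [Walk.edges_reverse, List.mem_reverse] at hmem
    apply hc.2
    rwa [hy, ← hu] at hmem

lemma four_cycle {V : Type*} {H : SimpleGraph V} {w x y z : V}
    (h1 : H.Adj w x) (h2 : H.Adj x y) (h3 : H.Adj y z) (h4 : H.Adj z w)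
    (hwy : w ≠ y) (hxz : x ≠ z) :
    ∃ c : H.Walk w w, c.IsCycle := by
  refine ⟨Walk.cons h1 (Walk.cons h2 (Walk.cons h3 (Walk.cons h4 Walk.nil))), ?_⟩
  have := h1.ne; have := h2.ne; have := h3.ne; have := h4.ne
  rw [Walk.isCycle_def]
  refine ⟨⟨?_⟩, by simp, ?_⟩
  · simp [Walk.edges_cons, List.nodup_cons, Sym2.eq_iff]
    aesop
  · simp [List.nodup_cons]
    aesop

lemma exists_leaf {β : Type*} [Fintype β] (T : SimpleGraph β) (hT : T.IsTree)
    (h2 : 2 ≤ Fintype.card β) : ∃ b0 b1, T.Adj b0 b1 ∧ ∀ y, T.Adj b0 y → y = b1 := by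
  classical
  have hsum : ∑ v, T.degree v = 2 * #T.edgeFinset := T.sum_degrees_eq_twice_card_edges
  have hedge : #T.edgeFinset + 1 = Fintype.card β := hT.card_edgeFinset
  have hexists : ∃ v, T.degree v ≤ 1 := by
    by_contra hall
    push_neg at hall
    have : ∑ v, T.degree v ≥ ∑ _v : β, 2 := Finset.sum_le_sum (fun v _ => hall v)
    simp only [Finset.sum_const, Finset.card_univ, smul_eq_mul] at this
    omega
  obtain ⟨v, hv⟩ := hexists
  obtain ⟨u, hu⟩ := Fintype.exists_ne_of_one_lt_card (by omega) v
  obtain ⟨p⟩ := hT.isConnected.preconnected v u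
  have hadj : ∃ y, T.Adj v y := by
    cases p with
    | nil => exact absurd rfl hu.symm
    | cons h _ => exact ⟨_, h⟩
  obtain ⟨y, hy⟩ := hadj
  have hdeg : T.degree v = 1 := by
    have : 0 < T.degree v := by
      rw [T.degree_pos_iff_exists_adj]; exact ⟨y, hy⟩
    omega
  rw [← T.card_neighborFinset_eq_degree, Finset.card_eq_one] at hdeg
  obtain ⟨b1, hb1⟩ := hdeg
  refine ⟨v, b1, ?_, ?_⟩
  · have : b1 ∈ T.neighborFinset v := by rw [hb1]; simp
    rwa [mem_neighborFinset] at this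
  · intro z hz
    have : z ∈ T.neighborFinset v := by rwa [mem_neighborFinset]
    rw [hb1] at this; simpa using this

lemma exists_adj_closer {V : Type*} {G : SimpleGraph V} (hc : G.Connected) {a a0 : V}
    (hne : a ≠ a0) : ∃ a', G.Adj a a' ∧ G.dist a' a0 < G.dist a a0 := by
  obtain ⟨p, hp⟩ := hc.exists_walk_length_eq_dist a a0
  have hpos : 0 < G.dist a a0 := hc.pos_dist_of_ne hne
  cases p with
  | nil => exact absurd rfl hne
  | @cons _ c _ h q =>
    refine ⟨c, h, ?_⟩
    have := SimpleGraph.dist_le q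
    simp [Walk.length_cons] at hp
    omega

variable {α β : Type*}

/-- The blocking property derived from cycle convexity in a box product. -/
lemma blocking {Tm : SimpleGraph α} {Tn : SimpleGraph β} {S : Set (α × β)}
    (hS : CycleConvex (Tm □ Tn) S) {a a' : α} {b b' : β}
    (hw : (a, b) ∉ S) (ha : Tm.Adj a a') (hb : Tn.Adj b b') :
    (a', b) ∉ S ∨ (a, b') ∉ S ∨ (a', b') ∉ S := by
  by_contra hall
  push_neg at hall
  obtain ⟨h1, h2, h3⟩ := hall
  set w : α × β := (a, b) with hwdef
  set H := ((Tm □ Tn).induce (insert w S)) with hH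
  have m1 : (a', b) ∈ insert w S := Set.mem_insert_of_mem _ h1
  have m2 : (a', b') ∈ insert w S := Set.mem_insert_of_mem _ h3
  have m3 : (a, b') ∈ insert w S := Set.mem_insert_of_mem _ h2
  have e1 : H.Adj ⟨w, Set.mem_insert w S⟩ ⟨(a', b), m1⟩ := by
    simp only [hH, comap_adj]
    exact SimpleGraph.boxProd_adj.mpr (Or.inl ⟨ha, rfl⟩)
  have e2 : H.Adj ⟨(a', b), m1⟩ ⟨(a', b'), m2⟩ := by
    simp only [hH, comap_adj]
    exact SimpleGraph.boxProd_adj.mpr (Or.inr ⟨hb, rfl⟩)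
  have e3 : H.Adj ⟨(a', b'), m2⟩ ⟨(a, b'), m3⟩ := by
    simp only [hH, comap_adj]
    exact SimpleGraph.boxProd_adj.mpr (Or.inl ⟨ha.symm, rfl⟩)
  have e4 : H.Adj ⟨(a, b'), m3⟩ ⟨w, Set.mem_insert w S⟩ := by
    simp only [hH, comap_adj]
    exact SimpleGraph.boxProd_adj.mpr (Or.inr ⟨hb.symm, rfl⟩)
  have d1 : (⟨w, Set.mem_insert w S⟩ : ↥(insert w S)) ≠ ⟨(a', b'), m2⟩ := by
    simp only [ne_eq, Subtype.mk.injEq, hwdef, Prod.mk.injEq, not_and]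
    intro h; exact absurd h ha.ne
  have d2 : (⟨(a', b), m1⟩ : ↥(insert w S)) ≠ ⟨(a, b'), m3⟩ := by
    simp only [ne_eq, Subtype.mk.injEq, Prod.mk.injEq, not_and]
    intro h; exact absurd h ha.ne'
  obtain ⟨c, hc⟩ := four_cycle e1 e2 e3 e4 d1 d2
  exact hS w hw c hc

/-- Removing a leaf column (in the second coordinate) gives a cycle convex set. -/
lemma cc_remove_snd {Tm : SimpleGraph α} {Tn : SimpleGraph β} {b0 b1 : β}
    (hadj : Tn.Adj b0 b1) (huniq : ∀ y, Tn.Adj b0 y → y = b1) :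
    CycleConvex (Tm □ Tn) {p : α × β | p.2 ≠ b0} := by
  rintro ⟨wa, wb⟩ hw c
  set S : Set (α × β) := {p : α × β | p.2 ≠ b0} with hSdef
  have hwb : wb = b0 := by simpa [hSdef] using hw
  subst hwb
  have hz : (wa, b1) ∈ insert (wa, wb) S := by
    apply Set.mem_insert_of_mem
    simpa [hSdef] using fun h => hadj.ne' h
  apply no_cycle_unique_nbr (z := ⟨(wa, b1), hz⟩)
  rintro ⟨⟨ya, yb⟩, hymem⟩ hyadj
  have hyadj' : (Tm □ Tn).Adj (wa, wb) (ya, yb) := hyadj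
  rcases SimpleGraph.boxProd_adj.mp hyadj' with ⟨hA, hB⟩ | ⟨hA, hB⟩
  · exfalso
    have hA' : Tm.Adj wa ya := hA
    have hB' : wb = yb := hB
    have hmem' : (ya, yb) ∉ S := by simp [hSdef, ← hB']
    have heq : (ya, yb) = (wa, wb) := by
      rcases hymem with h | h
      · exact h
      · exact absurd h hmem'
    have : ya = wa := (Prod.mk.injEq _ _ _ _ ▸ heq).1
    rw [this] at hA'
    exact Tm.irrefl hA'
  · have hA' : Tn.Adj wb yb := hA
    have hB' : wa = ya := hB
    have hyb : yb = b1 := huniq yb hA'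
    apply Subtype.ext
    show (ya, yb) = (wa, b1)
    rw [hyb, hB']

/-- Removing a leaf row (in the first coordinate) gives a cycle convex set. -/
lemma cc_remove_fst {Tm : SimpleGraph α} {Tn : SimpleGraph β} {a0 a1 : α}
    (hadj : Tm.Adj a0 a1) (huniq : ∀ y, Tm.Adj a0 y → y = a1) :
    CycleConvex (Tm □ Tn) {p : α × β | p.1 ≠ a0} := by
  rintro ⟨wa, wb⟩ hw c
  set S : Set (α × β) := {p : α × β | p.1 ≠ a0} with hSdef
  have hwa : wa = a0 := by simpa [hSdef] using hw
  subst hwa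
  have hz : (a1, wb) ∈ insert (wa, wb) S := by
    apply Set.mem_insert_of_mem
    simpa [hSdef] using fun h => hadj.ne' h
  apply no_cycle_unique_nbr (z := ⟨(a1, wb), hz⟩)
  rintro ⟨⟨ya, yb⟩, hymem⟩ hyadj
  have hyadj' : (Tm □ Tn).Adj (wa, wb) (ya, yb) := hyadj
  rcases SimpleGraph.boxProd_adj.mp hyadj' with ⟨hA, hB⟩ | ⟨hA, hB⟩
  · have hA' : Tm.Adj wa ya := hA
    have hB' : wb = yb := hB
    have hya : ya = a1 := huniq ya hA'
    apply Subtype.ext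
    show (ya, yb) = (a1, wb)
    rw [hya, hB']
  · exfalso
    have hA' : Tn.Adj wb yb := hA
    have hB' : wa = ya := hB
    have hmem' : (ya, yb) ∉ S := by simp [hSdef, ← hB']
    have heq : (ya, yb) = (wa, wb) := by
      rcases hymem with h | h
      · exact h
      · exact absurd h hmem'
    have : yb = wb := (Prod.mk.injEq _ _ _ _ ▸ heq).2
    rw [this] at hA'
    exact Tn.irrefl hA'

end Aux

theorem stmt_18 [Fintype α] [Fintype β] (Tm : SimpleGraph α) (Tn : SimpleGraph β)
    (h₁ : Tm.IsTree) (h₂ : Tn.IsTree) (m n : ℕ)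
    (hm : Fintype.card α = m) (hn : Fintype.card β = n) (hm2 : 2 ≤ m) (hn2 : 2 ≤ n) :
    cycleConvexityNumber (Tm □ Tn) = max (m * n - n) (m * n - m) := by
  classical
  have hna : Nonempty α := Fintype.card_pos_iff.mp (by omega)
  have hnb : Nonempty β := Fintype.card_pos_iff.mp (by omega)
  have hcard : Nat.card (α × β) = m * n := by
    simp [Nat.card_eq_fintype_card, Fintype.card_prod, hm, hn]
  set A : Set ℕ :=
    {k : ℕ | ∃ S : Set (α × β), S.ncard = k ∧ CycleConvex (Tm □ Tn) S ∧ S ≠ Set.univ}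
    with hA
  have hbdd : BddAbove A := by
    refine ⟨m * n, ?_⟩
    rintro k ⟨S, hk, -, -⟩
    rw [← hk, ← hcard, ← Set.ncard_univ]
    exact Set.ncard_le_ncard (Set.subset_univ S) (Set.toFinite _)
  -- lower bound memberships
  have hmemM : m * n - m ∈ A := by
    obtain ⟨b0, b1, hb, hbu⟩ := exists_leaf Tn h₂ (by omega)
    refine ⟨{p : α × β | p.2 ≠ b0}, ?_, cc_remove_snd hb hbu, ?_⟩
    · have hcompl : {p : α × β | p.2 ≠ b0}ᶜ = (fun a => (a, b0)) '' Set.univ := by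
        ext ⟨x, y⟩
        simp [eq_comm, Prod.ext_iff]
      have h1 : {p : α × β | p.2 ≠ b0}ᶜ.ncard = m := by
        rw [hcompl, Set.ncard_image_of_injective _ (fun x y h => (Prod.ext_iff.mp h).1),
          Set.ncard_univ, Nat.card_eq_fintype_card, hm]
      have h2 := Set.ncard_add_ncard_compl {p : α × β | p.2 ≠ b0}
        (Set.toFinite _) (Set.toFinite _)
      rw [hcard] at h2
      omega
    · intro hcon
      have : ((Classical.arbitrary α, b0) : α × β) ∈ {p : α × β | p.2 ≠ b0} := by
        rw [hcon]; trivial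
      simp at this
  have hmemN : m * n - n ∈ A := by
    obtain ⟨a0, a1, ha, hau⟩ := exists_leaf Tm h₁ (by omega)
    refine ⟨{p : α × β | p.1 ≠ a0}, ?_, cc_remove_fst ha hau, ?_⟩
    · have hcompl : {p : α × β | p.1 ≠ a0}ᶜ = (fun b => (a0, b)) '' Set.univ := by
        ext ⟨x, y⟩
        simp [eq_comm, Prod.ext_iff]
      have h1 : {p : α × β | p.1 ≠ a0}ᶜ.ncard = n := by
        rw [hcompl, Set.ncard_image_of_injective _ (fun x y h => (Prod.ext_iff.mp h).2),
          Set.ncard_univ, Nat.card_eq_fintype_card, hn]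
      have h2 := Set.ncard_add_ncard_compl {p : α × β | p.1 ≠ a0}
        (Set.toFinite _) (Set.toFinite _)
      rw [hcard] at h2
      omega
    · intro hcon
      have : ((a0, Classical.arbitrary β) : α × β) ∈ {p : α × β | p.1 ≠ a0} := by
        rw [hcon]; trivial
      simp at this
  -- upper bound
  have hub : ∀ k ∈ A, k ≤ max (m * n - n) (m * n - m) := by
    rintro k ⟨S, hk, hcc, hne⟩
    have hCne : Sᶜ.Nonempty := Set.nonempty_compl.mpr hne
    have hcc2 := Set.ncard_add_ncard_compl S (Set.toFinite _) (Set.toFinite _)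
    rw [hcard] at hcc2
    have hproj : (Prod.fst '' Sᶜ = Set.univ) ∨ (Prod.snd '' Sᶜ = Set.univ) := by
      by_contra hcon
      push_neg at hcon
      obtain ⟨hc1, hc2⟩ := hcon
      obtain ⟨a0, ha0⟩ := Set.ne_univ_iff_exists_notMem _ |>.mp hc1
      obtain ⟨b0, hb0⟩ := Set.ne_univ_iff_exists_notMem _ |>.mp hc2
      set f : α × β → ℕ := fun p => Tm.dist p.1 a0 + Tn.dist p.2 b0 with hf
      have himne : (f '' Sᶜ).Nonempty := hCne.image f
      have hmem := Nat.sInf_mem himne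
      obtain ⟨⟨a, b⟩, hab, hfab⟩ := hmem
      have hane : a ≠ a0 := by
        intro h
        exact ha0 ⟨(a, b), hab, h⟩
      have hbne : b ≠ b0 := by
        intro h
        exact hb0 ⟨(a, b), hab, h⟩
      obtain ⟨a', ha', hda⟩ := exists_adj_closer h₁.isConnected hane
      obtain ⟨b', hb', hdb⟩ := exists_adj_closer h₂.isConnected hbne
      have hblock := blocking hcc (Set.notMem_of_mem_compl hab) ha' hb'
      have key : ∀ q : α × β, q ∈ Sᶜ → f q < f (a, b) → False := by
        intro q hq hlt
        have : sInf (f '' Sᶜ) ≤ f q := Nat.sInf_le ⟨q, hq, rfl⟩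
        omega
      rcases hblock with hq | hq | hq
      · exact key (a', b) hq (by simp only [hf]; omega)
      · exact key (a, b') hq (by simp only [hf]; omega)
      · exact key (a', b') hq (by simp only [hf]; omega)
    rcases hproj with hp | hp
    · have h1 : m ≤ Sᶜ.ncard := by
        have := Set.ncard_image_le (f := Prod.fst) (s := Sᶜ) (Set.toFinite _)
        rw [hp, Set.ncard_univ, Nat.card_eq_fintype_card, hm] at this
        exact this
      have : k ≤ m * n - m := by omega
      omega
    · have h1 : n ≤ Sᶜ.ncard := by
        have := Set.ncard_image_le (f := Prod.snd) (s := Sᶜ) (Set.toFinite _)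
        rw [hp, Set.ncard_univ, Nat.card_eq_fintype_card, hn] at this
        exact this
      have : k ≤ m * n - n := by omega
      omega
  rw [cycleConvexityNumber]
  have : {k : ℕ | ∃ S : Set (α × β), S.ncard = k ∧ CycleConvex (Tm □ Tn) S ∧ S ≠ Set.univ} = A :=
    rfl
  rw [this]
  refine le_antisymm (csSup_le ⟨_, hmemM⟩ hub) ?_
  exact max_le (le_csSup hbdd hmemN) (le_csSup hbdd hmemM)
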